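/- A Motzkin tree is the skeleton of at least one closed lambda term in de Bruijn form if and only if on every path from the root to a leaf there occurs at least one unary node l (i.e., every leaf has at least one l-node among its ancestors). -/
import Mathlib


/-- Motzkin trees (binary-unary trees): leaf `v`, unary `l`, binary `a`. -/
inductive Mot : Type
  | v : Mot
  | l : Mot → Mot
  | a : Mot → Mot → Mot
deriving DecidableEq

/-- Lambda terms in de Bruijn form. -/
inductive Lam : Type
  | v : Nat → Lam
  | l : Lam → Lam
  | a : Lam → Lam → Lam
deriving DecidableEq

/-- `t` is closed at depth `d`. -/
def Lam.closedAt : Lam → Nat → Prop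
  | .v i, d => i < d
  | .l t, d => t.closedAt (d + 1)
  | .a s t, d => s.closedAt d ∧ t.closedAt d

/-- The Motzkin-tree skeleton of a de Bruijn term. -/
def Lam.skel : Lam → Mot
  | .v _ => .v
  | .l t => .l t.skel
  | .a s t => .a s.skel t.skel

/-- For each leaf (in left-to-right order), the number of unary `l` nodes on the
path from the root to that leaf, starting from `d` accumulated binders. -/
def Mot.leafDepths : Mot → Nat → List Nat
  | .v, d => [d]
  | .l t, d => t.leafDepths (d + 1)
  | .a s t, d => s.leafDepths d ++ t.leafDepths d

theorem aux1 (X : Mot) : ∀ d : Nat,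
    (∃ t : Lam, t.closedAt d ∧ t.skel = X) ↔ ∀ k ∈ X.leafDepths d, 0 < k := by
  induction X with
  | v =>
    intro d
    constructor
    · rintro ⟨t, hc, hs⟩ k hk
      cases t with
      | v i =>
        simp [Mot.leafDepths] at hk
        subst hk
        exact Nat.lt_of_le_of_lt (Nat.zero_le i) hc
      | l t => simp [Lam.skel] at hs
      | a s t => simp [Lam.skel] at hs
    · intro h
      have hd : 0 < d := h d (by simp [Mot.leafDepths])
      exact ⟨Lam.v 0, hd, rfl⟩
  | l X ih =>
    intro d
    constructor
    · rintro ⟨t, hc, hs⟩ k hk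
      cases t with
      | v i => simp [Lam.skel] at hs
      | l t =>
        simp [Lam.skel] at hs
        exact (ih (d + 1)).mp ⟨t, hc, hs⟩ k hk
      | a s t => simp [Lam.skel] at hs
    · intro h
      obtain ⟨t, hc, hs⟩ := (ih (d + 1)).mpr h
      exact ⟨Lam.l t, hc, by simp [Lam.skel, hs]⟩
  | a X Y ihX ihY =>
    intro d
    constructor
    · rintro ⟨t, hc, hs⟩ k hk
      cases t with
      | v i => simp [Lam.skel] at hs
      | l t => simp [Lam.skel] at hs
      | a s t =>
        simp [Lam.skel] at hs
        simp [Mot.leafDepths] at hk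
        rcases hk with hk | hk
        · exact (ihX d).mp ⟨s, hc.1, hs.1⟩ k hk
        · exact (ihY d).mp ⟨t, hc.2, hs.2⟩ k hk
    · intro h
      obtain ⟨s, hcs, hss⟩ := (ihX d).mpr fun k hk =>
        h k (by simp [Mot.leafDepths, hk])
      obtain ⟨t, hct, hst⟩ := (ihY d).mpr fun k hk =>
        h k (by simp [Mot.leafDepths, hk])
      exact ⟨Lam.a s t, ⟨hcs, hct⟩, by simp [Lam.skel, hss, hst]⟩

/-- A Motzkin tree is the skeleton of at least one closed de Bruijn lambda term iff
every root-to-leaf path contains at least one unary node `l`. -/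
theorem stmt1 (X : Mot) :
    (∃ t : Lam, t.closedAt 0 ∧ t.skel = X) ↔ ∀ d ∈ X.leafDepths 0, 0 < d := by
  exact aux1 X 0
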